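/- arXiv:2603.00305 — 8 statements merged into one kernel-verified Lean document; each statement's English description precedes it below -/
import Mathlib

section
/- For any directed set P, the cofinality of the character χ(P) belongs to the Tukey spectrum Sp_T(P), i.e., the regular cardinal cf(χ(P)) Tukey-embeds below P. -/
universe u v w

/-- A subset of a preorder is bounded if some element dominates all its members. -/
def DirBounded {P : Type u} [Preorder P] (A : Set P) : Prop :=
  ∃ p : P, ∀ a ∈ A, a ≤ p

/-- A subset of a preorder is unbounded if it is not bounded. -/
def DirUnbounded {P : Type u} [Preorder P] (A : Set P) : Prop :=
  ¬ DirBounded A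

/-- A subset is cofinal if every element is below some member of it. -/
def DirCofinal {P : Type u} [Preorder P] (B : Set P) : Prop :=
  ∀ p : P, ∃ b ∈ B, p ≤ b

/-- `TukeyLE P Q` : `P ≤_T Q`, witnessed by a cofinal map `f : Q → P`
(a map sending every cofinal subset of `Q` to a cofinal subset of `P`). -/
def TukeyLE (P : Type u) (Q : Type v) [Preorder P] [Preorder Q] : Prop :=
  ∃ f : Q → P, ∀ B : Set Q, DirCofinal B → DirCofinal (f '' B)

/-- `UnbddMap P Q` : there is an unbounded map `g : P → Q`, i.e. one sending
every unbounded subset of `P` to an unbounded subset of `Q` (witnessing `P ≤_T Q`). -/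
def UnbddMap (P : Type u) (Q : Type v) [Preorder P] [Preorder Q] : Prop :=
  ∃ g : P → Q, ∀ A : Set P, DirUnbounded A → DirUnbounded (g '' A)

/-- The character `χ(P)`: least cardinality of a cofinal subset of `P`. -/
noncomputable def chi (P : Type u) [Preorder P] : Cardinal.{u} :=
  sInf {c : Cardinal.{u} | ∃ B : Set P, DirCofinal B ∧ Cardinal.mk B = c}

/-- `λ ∈ Sp_T(P)`: `λ` is regular and there is a `λ`-sequence in `P`
every size-`λ` subfamily of which is unbounded in `P` (equivalently `λ ≤_T P`). -/
def InSpT (P : Type u) [Preorder P] (l : Cardinal.{u}) : Prop :=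
  l.IsRegular ∧ ∃ p : l.ord.ToType → P,
    ∀ S : Set l.ord.ToType, Cardinal.mk S = l → DirUnbounded (p '' S)

open Cardinal Ordinal in
/-- For a directed set `P` (with no greatest element, so that `χ(P)` is infinite),
`cf(χ(P)) ∈ Sp_T(P)`. -/
theorem stmt2 {P : Type u} [Preorder P] [IsDirected P (· ≤ ·)] [Nonempty P]
    (hnt : ∀ p : P, ∃ q : P, ¬ q ≤ p) :
    InSpT P ((chi P).ord.cof) := by
  classical
  set κ := chi P with hκdef
  have hne : {c : Cardinal.{u} | ∃ B : Set P, DirCofinal B ∧ Cardinal.mk B = c}.Nonempty :=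
    ⟨Cardinal.mk (Set.univ : Set P), Set.univ, fun p => ⟨p, trivial, le_rfl⟩, rfl⟩
  obtain ⟨B, hBcof, hBmk⟩ : ∃ B : Set P, DirCofinal B ∧ Cardinal.mk B = κ := csInf_mem hne
  have hmin : ∀ A : Set P, Cardinal.mk A < κ → ¬ DirCofinal A := by
    intro A hA hcof
    have : κ ≤ Cardinal.mk A := csInf_le' (show Cardinal.mk A ∈
      {c : Cardinal.{u} | ∃ B : Set P, DirCofinal B ∧ Cardinal.mk B = c} from ⟨A, hcof, rfl⟩)
    exact absurd this (not_le_of_gt hA)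
  have hκinf : ℵ₀ ≤ κ := by
    by_contra h
    push_neg at h
    rw [← hBmk] at h
    have hfin : B.Finite := Cardinal.lt_aleph0_iff_set_finite.1 h
    obtain ⟨M, hM⟩ := hfin.toFinset.exists_le
    obtain ⟨q, hq⟩ := hnt M
    obtain ⟨b, hb, hqb⟩ := hBcof q
    exact hq (hqb.trans (hM b (hfin.mem_toFinset.2 hb)))
  have hreg : (κ.ord.cof).IsRegular := Cardinal.isRegular_cof (Cardinal.isSuccLimit_ord hκinf)
  refine ⟨hreg, ?_⟩
  set l := κ.ord.cof with hldef
  haveI : IsWellOrder κ.ord.ToType (· < ·) := isWellOrder_lt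
  haveI : IsWellOrder l.ord.ToType (· < ·) := isWellOrder_lt
  obtain ⟨f, hf⟩ := Ordinal.exists_fundamental_sequence κ.ord
  have hmkB : Cardinal.mk (κ.ord.ToType) = Cardinal.mk B := by
    rw [Cardinal.mk_toType, Cardinal.card_ord, hBmk]
  obtain ⟨E⟩ := Cardinal.eq.1 hmkB
  have hto : ∀ α : l.ord.ToType, typein (α := l.ord.ToType) (· < ·) α < κ.ord.cof.ord :=
    fun α => typein_lt_self α
  set ξ : l.ord.ToType → Ordinal :=
    fun α => f (typein (α := l.ord.ToType) (· < ·) α) (hto α) with hξdef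
  have hξlt : ∀ α, ξ α < κ.ord := fun α => hf.lt (hto α)
  set A : l.ord.ToType → Set P := fun α =>
    (fun ζ : κ.ord.ToType => (E ζ : P)) ''
      {ζ : κ.ord.ToType | typein (α := κ.ord.ToType) (· < ·) ζ < ξ α} with hAdef
  have hAcard : ∀ α, Cardinal.mk (A α) < κ := by
    intro α
    refine lt_of_le_of_lt Cardinal.mk_image_le ?_
    set z : κ.ord.ToType :=
      enum (α := κ.ord.ToType) (· < ·)
        ⟨ξ α, by rw [type_toType]; exact hξlt α⟩ with hzdef
    have hz : typein (α := κ.ord.ToType) (· < ·) z = ξ α := typein_enum _ _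
    have hset : {ζ : κ.ord.ToType | typein (α := κ.ord.ToType) (· < ·) ζ < ξ α}
        = {ζ : κ.ord.ToType | ζ < z} := by
      ext ζ
      simp only [Set.mem_setOf_eq, ← hz, typein_lt_typein]
    rw [hset]
    have hcard : Cardinal.mk {ζ : κ.ord.ToType | ζ < z}
        = (typein (α := κ.ord.ToType) (· < ·) z).card :=
      (@Ordinal.card_typein _ ((· < ·) : κ.ord.ToType → κ.ord.ToType → Prop) ‹_› z).symm
    rw [hcard, hz]
    exact Cardinal.lt_ord.1 (hξlt α)
  have hwit : ∀ α : l.ord.ToType, ∃ q : P, ∀ b ∈ A α, ¬ q ≤ b := by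
    intro α
    have h := hmin (A α) (hAcard α)
    unfold DirCofinal at h
    push_neg at h
    exact h
  choose p hp using hwit
  refine ⟨p, ?_⟩
  intro S hS
  rintro ⟨q, hq⟩
  -- q bounds p '' S; get b ∈ B with q ≤ b
  obtain ⟨b, hb, hqb⟩ := hBcof q
  set ζ₀ : κ.ord.ToType := E.symm ⟨b, hb⟩ with hζ₀def
  have hEζ₀ : (E ζ₀ : P) = b := by rw [hζ₀def, Equiv.apply_symm_apply]
  set ξ₀ : Ordinal := typein (α := κ.ord.ToType) (· < ·) ζ₀ with hξ₀def
  have hξ₀lt : ξ₀ < κ.ord := typein_lt_self ζ₀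
  -- find i < l.ord with ξ₀ ≤ f i
  have hblsub : ξ₀ < Ordinal.blsub κ.ord.cof.ord f := by rw [hf.blsub_eq]; exact hξ₀lt
  obtain ⟨i, hi, hile⟩ := Ordinal.lt_blsub_iff.1 hblsub
  set α₁ : l.ord.ToType := enum (α := l.ord.ToType) (· < ·) ⟨i, by rw [type_toType]; exact hi⟩
    with hα₁def
  have hα₁ : typein (α := l.ord.ToType) (· < ·) α₁ = i := typein_enum _ _
  -- S is unbounded in l.ord.ToType
  have hSub : ∀ β : l.ord.ToType, ∃ α ∈ S, β < α := by
    intro β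
    by_contra hc
    push_neg at hc
    haveI : NoMaxOrder l.ord.ToType := Cardinal.noMaxOrder hreg.aleph0_le
    obtain ⟨β', hβ'⟩ := exists_gt β
    have hsub : S ⊆ {α : l.ord.ToType | α < β'} := fun α hα => lt_of_le_of_lt (hc α hα) hβ'
    have h1 : Cardinal.mk S ≤ Cardinal.mk {α : l.ord.ToType | α < β'} :=
      Cardinal.mk_le_mk_of_subset hsub
    have h2 : Cardinal.mk {α : l.ord.ToType | α < β'}
        = (typein (α := l.ord.ToType) (· < ·) β').card :=
      (@Ordinal.card_typein _ ((· < ·) : l.ord.ToType → l.ord.ToType → Prop) ‹_› β').symm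
    have h3 : (typein (α := l.ord.ToType) (· < ·) β').card < l :=
      Cardinal.lt_ord.1 (typein_lt_self β')
    rw [hS, h2] at h1
    exact absurd (lt_of_le_of_lt h1 h3) (lt_irrefl l)
  obtain ⟨α, hαS, hα⟩ := hSub α₁
  -- ξ₀ < ξ α
  have hξ₀ξ : ξ₀ < ξ α := by
    have hlt : i < typein (α := l.ord.ToType) (· < ·) α := by
      rw [← hα₁]; exact (typein_lt_typein _).2 hα
    exact lt_of_le_of_lt hile (hf.2.1 hi (hto α) hlt)
  -- b ∈ A α
  have hbA : b ∈ A α := ⟨ζ₀, hξ₀ξ, hEζ₀⟩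
  have hpq : p α ≤ q := hq (p α) ⟨α, hαS, rfl⟩
  exact hp α b hbA (hpq.trans hqb)
end

section
/- Let λ be a cardinal, and suppose (Q_α)_{α<λ} is a family of directed sets with Q_α ≤_T P for each α < λ, where P is a λ⁺-directed set (every subset of P of size ≤ λ has an upper bound). Then the full product ∏_{α<λ} Q_α (with coordinatewise order) is Tukey below P. -/
universe u v w

/-- If each `Q α` (`α < λ`) is Tukey below `P` and `P` is `λ⁺`-directed,
then the full product `∏_{α<λ} Q α` is Tukey below `P`. -/
theorem stmt4 {P : Type u} [Preorder P] [IsDirected P (· ≤ ·)]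
    (l : Cardinal.{u}) (Q : l.ord.ToType → Type u)
    [∀ α, Preorder (Q α)] [∀ α, IsDirected (Q α) (· ≤ ·)]
    (hT : ∀ α, UnbddMap (Q α) P)
    (hdir : ∀ A : Set P, Cardinal.mk A ≤ l → DirBounded A) :
    UnbddMap (∀ α, Q α) P := by
  choose g hg using hT
  have hcard : ∀ x : ∀ α, Q α, Cardinal.mk (Set.range fun α => g α (x α)) ≤ l := by
    intro x
    calc Cardinal.mk (Set.range fun α => g α (x α)) ≤ Cardinal.mk l.ord.ToType :=
          Cardinal.mk_range_le
      _ = l := Cardinal.mk_ord_toType l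
  choose f hf using fun x => hdir _ (hcard x)
  refine ⟨f, ?_⟩
  intro A hA hbdd
  apply hA
  obtain ⟨p, hp⟩ := hbdd
  have hproj : ∀ α, DirBounded ((fun a => a α) '' A) := by
    intro α
    by_contra h
    refine hg α _ h ⟨p, ?_⟩
    rintro _ ⟨_, ⟨a, ha, rfl⟩, rfl⟩
    exact le_trans (hf a _ (Set.mem_range_self α)) (hp _ ⟨a, ha, rfl⟩)
  choose q hq using hproj
  exact ⟨q, fun a ha α => hq α _ ⟨a, ha, rfl⟩⟩
end

section
/- Let P be a directed set, θ < χ(P) a cardinal, and ⟨A_α : α < θ⟩ a sequence of subsets of P each of cardinality less than χ(P) such that ⋃_{α<θ} A_α is cofinal in P. Then sup over α < θ of the least cardinality of a set X_α ⊆ A_α with A_α \ X_α bounded in P equals χ(P). -/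
universe u v w

/-- `J_bd(A,P)` : the subsets of `A` that are bounded in `P`. -/
def Jbd {P : Type u} [Preorder P] (A : Set P) : Set (Set P) :=
  {X | X ⊆ A ∧ DirBounded X}

/-- If `θ < χ(P)` and `⟨A_α : α < θ⟩` are subsets of `P` of size `< χ(P)` with
`⋃ A_α` cofinal, then `sup_α δ_{(J_bd(A_α,P))*} = χ(P)`, where
`δ_{(J_bd(A_α,P))*}` is the least size of `X ⊆ A_α` with `A_α \ X` bounded. -/
theorem stmt11 {P : Type u} [Preorder P] [IsDirected P (· ≤ ·)]
    (θ : Cardinal.{u}) (hθ : θ < chi P)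
    (A : θ.ord.ToType → Set P) (hA : ∀ α, Cardinal.mk (A α) < chi P)
    (hcof : DirCofinal (⋃ α, A α)) :
    (⨆ α, sInf {c : Cardinal.{u} |
        ∃ X : Set P, X ⊆ A α ∧ DirBounded (A α \ X) ∧ Cardinal.mk X = c}) = chi P := by
  have hchile : ∀ B : Set P, DirCofinal B → chi P ≤ Cardinal.mk B := fun B hB =>
    csInf_le' ⟨B, hB, rfl⟩
  -- P is nonempty
  have hP : Nonempty P := by
    by_contra h
    have hemp : DirCofinal (∅ : Set P) := fun p => (h ⟨p⟩).elim
    have : chi P ≤ 0 := (hchile ∅ hemp).trans_eq (by simp)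
    exact (Cardinal.zero_le θ).not_gt (hθ.trans_le this)
  obtain ⟨p0⟩ := id hP
  -- θ ≠ 0, so the index type is nonempty
  have hθ0 : θ ≠ 0 := by
    rintro rfl
    have : IsEmpty ((0 : Cardinal).ord.ToType) := by
      rw [Ordinal.toType_empty_iff_eq_zero]; simp
    obtain ⟨b, hb, -⟩ := hcof p0
    rw [Set.iUnion_of_empty] at hb
    exact hb
  have hne : Nonempty θ.ord.ToType := by
    rw [Ordinal.toType_nonempty_iff_ne_zero]
    simpa using hθ0
  -- chi P is infinite
  have h1 : (1 : Cardinal) < chi P :=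
    lt_of_le_of_lt (Cardinal.one_le_iff_ne_zero.2 hθ0) hθ
  have hchiinf : Cardinal.aleph0 ≤ chi P := by
    by_contra h
    push_neg at h
    have hSne : {c : Cardinal.{u} | ∃ B : Set P, DirCofinal B ∧ Cardinal.mk B = c}.Nonempty :=
      ⟨Cardinal.mk (Set.univ : Set P), Set.univ, fun p => ⟨p, trivial, le_refl p⟩, rfl⟩
    obtain ⟨B, hBcof, hBmk⟩ := csInf_mem hSne
    have hBfin : B.Finite := by
      rw [← Cardinal.lt_aleph0_iff_set_finite, hBmk]; exact h
    obtain ⟨M, hM⟩ := hBfin.exists_le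
    obtain ⟨b, hb, hMb⟩ := hBcof M
    have : DirCofinal ({b} : Set P) := fun q => by
      obtain ⟨b', hb', hq⟩ := hBcof q
      exact ⟨b, rfl, hq.trans ((hM b' hb').trans hMb)⟩
    have := (hchile _ this).trans_eq (Cardinal.mk_singleton b)
    exact h1.not_ge this
  -- the sets whose infima we take
  set S : θ.ord.ToType → Set Cardinal.{u} := fun α =>
    {c : Cardinal.{u} | ∃ X : Set P, X ⊆ A α ∧ DirBounded (A α \ X) ∧ Cardinal.mk X = c}
    with hS
  have hSne : ∀ α, (S α).Nonempty := fun α =>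
    ⟨Cardinal.mk (A α), A α, subset_rfl, ⟨p0, fun a ha => (ha.2 ha.1).elim⟩, rfl⟩
  have hδlt : ∀ α, sInf (S α) < chi P := fun α =>
    (csInf_le' (a := Cardinal.mk (A α)) (s := S α) ⟨A α, subset_rfl, ⟨p0, fun a ha => (ha.2 ha.1).elim⟩, rfl⟩).trans_lt (hA α)
  refine le_antisymm (ciSup_le fun α => (hδlt α).le) ?_
  by_contra h
  push_neg at h
  -- pick optimal X α for each α
  choose X hX1 hX2 hX3 using fun α => csInf_mem (hSne α)
  choose p hp using hX2
  set B : Set P := (⋃ α, X α) ∪ Set.range p with hB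
  have hBcof : DirCofinal B := by
    intro q
    obtain ⟨a, ha, hqa⟩ := hcof q
    obtain ⟨α, hα⟩ := Set.mem_iUnion.1 ha
    by_cases hx : a ∈ X α
    · exact ⟨a, Or.inl (Set.mem_iUnion.2 ⟨α, hx⟩), hqa⟩
    · exact ⟨p α, Or.inr ⟨α, rfl⟩, hqa.trans (hp α a ⟨hα, hx⟩)⟩
  have hcard : Cardinal.mk B < chi P := by
    have h1' : Cardinal.mk (⋃ α, X α) ≤ θ * ⨆ α, sInf (S α) := by
      have := Cardinal.mk_iUnion_le X
      rwa [Cardinal.mk_ord_toType, funext hX3] at this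
    have h2' : Cardinal.mk (Set.range p) ≤ θ := by
      have := Cardinal.mk_range_le (f := p)
      rwa [Cardinal.mk_ord_toType] at this
    calc Cardinal.mk B ≤ Cardinal.mk (⋃ α, X α) + Cardinal.mk (Set.range p) :=
          Cardinal.mk_union_le _ _
      _ ≤ θ * (⨆ α, sInf (S α)) + θ := add_le_add h1' h2'
      _ < chi P := Cardinal.add_lt_of_lt hchiinf (Cardinal.mul_lt_of_lt hchiinf hθ h) hθ
  exact hcard.not_ge (hchile B hBcof)
end

section
/- Let P be a directed set and I an ideal that is χ(P)⁺-complete (closed under unions of χ(P)-many members). Then P is not I-cohesive. Consequently, if P is I-cohesive for some λ-complete ideal I on λ, then λ ≤ χ(P). -/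
universe u v w

/-- `P` is `I`-cohesive: there is a family indexed by the space of `I` such that
the subfamily indexed by any `I`-positive set is unbounded in `P`. -/
def Cohesive (P : Type u) [Preorder P] {S : Type v} (I : Set (Set S)) : Prop :=
  ∃ p : S → P, ∀ T : Set S, T ∉ I → DirUnbounded (p '' T)

lemma exists_cofinal_chi {P : Type u} [Preorder P] :
    ∃ B : Set P, DirCofinal B ∧ Cardinal.mk B = chi P := by
  have hne : {c : Cardinal.{u} | ∃ B : Set P, DirCofinal B ∧ Cardinal.mk B = c}.Nonempty :=
    ⟨_, Set.univ, fun p => ⟨p, trivial, le_refl p⟩, rfl⟩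
  exact csInf_mem hne

lemma not_cohesive_aux {P : Type u} [Preorder P] (S : Type u) (I : Set (Set S))
    (hu : (Set.univ : Set S) ∉ I)
    (hcomp : ∀ (ι : Type u) (f : ι → Set S), Cardinal.mk ι ≤ chi P →
      (∀ i, f i ∈ I) → (⋃ i, f i) ∈ I) :
    ¬ Cohesive P I := by
  rintro ⟨p, hp⟩
  obtain ⟨B, hB, hBk⟩ := exists_cofinal_chi (P := P)
  choose b hbB hble using fun s => hB (p s)
  set f : B → Set S := fun q => {s | b s = (q : P)} with hf
  have hI : ∀ q : B, f q ∈ I := by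
    intro q
    by_contra h
    apply hp _ h
    refine ⟨(q : P), ?_⟩
    rintro a ⟨s, hs, rfl⟩
    have hsq : b s = (q : P) := hs
    exact hsq ▸ hble s
  have huniv : (⋃ q, f q) = Set.univ := by
    apply Set.eq_univ_of_forall
    intro s
    exact Set.mem_iUnion.mpr ⟨⟨b s, hbB s⟩, rfl⟩
  exact hu (huniv ▸ hcomp B f (le_of_eq hBk) hI)

/-- If `I` is a proper `χ(P)⁺`-complete ideal (closed under unions of `χ(P)`-many
members) then `P` is not `I`-cohesive; consequently, if `P` is `I`-cohesive for some
proper `λ`-complete ideal `I` on a set of size `λ`, then `λ ≤ χ(P)`. -/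
theorem stmt13 {P : Type u} [Preorder P] [IsDirected P (· ≤ ·)] :
    (∀ (S : Type u) (I : Set (Set S)), (Set.univ : Set S) ∉ I →
      (∀ (ι : Type u) (f : ι → Set S), Cardinal.mk ι ≤ chi P →
        (∀ i, f i ∈ I) → (⋃ i, f i) ∈ I) →
      ¬ Cohesive P I) ∧
    (∀ (l : Cardinal.{u}) (I : Set (Set l.ord.ToType)),
      (Set.univ : Set l.ord.ToType) ∉ I →
      (∀ (ι : Type u) (f : ι → Set l.ord.ToType), Cardinal.mk ι < l →
        (∀ i, f i ∈ I) → (⋃ i, f i) ∈ I) →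
      Cohesive P I → l ≤ chi P) := by
  constructor
  · exact fun S I hu hcomp => not_cohesive_aux S I hu hcomp
  · intro l I hu hcomp hcoh
    by_contra h
    exact not_cohesive_aux _ I hu
      (fun ι f hle hf => hcomp ι f (lt_of_le_of_lt hle (not_le.mp h)) hf) hcoh
end

section
/- Let P be a directed set, B a set of regular cardinals with |B| regular, and I an ideal on B such that P is not I-cohesive. Suppose ∏B/I has true cofinality μ, witnessed by a <_I-increasing cofinal (dominating) sequence ⟨f_β : β < μ⟩, and for each b ∈ B fix a sequence ⟨p^b_α : α < b⟩ witnessing b ∈ Sp_T(P). Then μ ∈ Sp_T(P). -/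
universe u v w

/-- `∏ B` for a set `B` of (regular) cardinals: functions `f` with `f b < b`
(as ordinals) for each `b ∈ B`. -/
def prodSet (B : Set Cardinal.{u}) : Type (u + 1) :=
  {f : B → Ordinal.{u} // ∀ b : B, f b < (b : Cardinal.{u}).ord}

/-- `f <_I g` : `{b : f(b) ≥ g(b)} ∈ I`. -/
def ltI {B : Set Cardinal.{u}} (I : Set (Set ↥B)) (f g : prodSet B) : Prop :=
  {b : B | ¬ f.1 b < g.1 b} ∈ I

/-- Stepping up with an ideal: if `B ⊆ Sp_T(P)` consists of regular cardinals,
`|B|` is regular, `I` is an ideal on `B` such that `P` is not `I`-cohesive, and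
`tcf(∏ B / I) = μ` is witnessed by a `<_I`-increasing dominating scale of length
`μ`, then `μ ∈ Sp_T(P)`. -/
theorem stmt15 {P : Type u} [Preorder P] [IsDirected P (· ≤ ·)]
    (B : Set Cardinal.{u}) (hBreg : ∀ b ∈ B, Cardinal.IsRegular b)
    (hBsp : ∀ b ∈ B, InSpT P b)
    (hBcard : (Cardinal.mk B).IsRegular)
    (I : Set (Set ↥B))
    (hdown : ∀ X Y : Set ↥B, X ⊆ Y → Y ∈ I → X ∈ I)
    (hunion : ∀ X Y : Set ↥B, X ∈ I → Y ∈ I → X ∪ Y ∈ I)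
    (hcoh : ¬ Cohesive P I)
    (μ : Cardinal.{u}) (hμreg : μ.IsRegular)
    (F : μ.ord.ToType → prodSet B)
    (hFinc : ∀ i j : μ.ord.ToType, i < j → ltI I (F i) (F j))
    (hFcof : ∀ g : prodSet B, ∃ i, ltI I g (F i)) :
    InSpT P μ := by
  classical
  -- choose witnesses for each b ∈ B
  have hsp : ∀ b : ↥B, ∃ p : (b : Cardinal.{u}).ord.ToType → P,
      ∀ S : Set (b : Cardinal.{u}).ord.ToType, Cardinal.mk S = (b : Cardinal.{u}) →
        DirUnbounded (p '' S) := fun b => (hBsp b b.2).2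
  choose pb hpb using hsp
  -- the family associated to each β
  set fam : μ.ord.ToType → ↥B → P :=
    fun β b => pb b ((Ordinal.ToType.mk (o := (b : Cardinal.{u}).ord)) ⟨(F β).1 b, (F β).2 b⟩) with hfamdef
  -- non-cohesiveness: each such family is bounded on an I-positive set
  have hfam : ∀ β : μ.ord.ToType, ∃ T : Set ↥B, T ∉ I ∧ DirBounded (fam β '' T) := by
    intro β
    by_contra h
    push_neg at h
    exact hcoh ⟨fam β, fun T hT => h T hT⟩
  choose X hXI q0 hq0 using hfam
  refine ⟨hμreg, q0, ?_⟩
  intro S hS hbd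
  obtain ⟨q, hq⟩ := hbd
  -- the set of indices below q, for each b
  set Ab : ∀ b : ↥B, Set (b : Cardinal.{u}).ord.ToType :=
    fun b => {x | pb b x ≤ q} with hAbdef
  have hAb_lt : ∀ b : ↥B, Cardinal.mk (Ab b) < (b : Cardinal.{u}) := by
    intro b
    have hle : Cardinal.mk (Ab b) ≤ (b : Cardinal.{u}) :=
      (Cardinal.mk_set_le (Ab b)).trans_eq (Cardinal.mk_ord_toType (b : Cardinal.{u}))
    rcases hle.lt_or_eq with h | h
    · exact h
    · exact absurd h (fun h =>
        hpb b (Ab b) h ⟨q, by rintro a ⟨x, hx, rfl⟩; exact hx⟩)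
  -- the bounding function g
  set g0 : ∀ b : ↥B, Ordinal.{u} :=
    fun b => Ordinal.lsub (fun x : Ab b =>
      ((((Ordinal.ToType.mk (o := (b : Cardinal.{u}).ord))).symm x.1 : Set.Iio _) : Ordinal.{u}))
      with hg0def
  have hg0 : ∀ b : ↥B, g0 b < (b : Cardinal.{u}).ord := by
    intro b
    exact Ordinal.lsub_lt_ord (by rw [(hBreg b b.2).cof_eq]; exact hAb_lt b)
      (fun x => (((Ordinal.ToType.mk (o := (b : Cardinal.{u}).ord))).symm x.1).2)
  obtain ⟨i, hi⟩ := hFcof ⟨g0, hg0⟩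
  -- S is cofinal: find β ∈ S above i
  have hcof : ∃ β ∈ S, i < β := by
    by_contra h
    push_neg at h
    have hsub : S ⊆ Set.Iic i := fun β hβ => h β hβ
    have h1 : Cardinal.mk S ≤ Cardinal.mk (Set.Iic i) := Cardinal.mk_le_mk_of_subset hsub
    have h2 : Cardinal.mk (Set.Iic i) ≤ Cardinal.mk (Set.Iio i) + 1 := by
      rw [← Set.Iio_union_right]
      exact (Cardinal.mk_union_le _ _).trans (by simp)
    have h3 : Cardinal.mk (Set.Iio i) < μ := Cardinal.mk_Iio_ord_toType i
    have h4 : Cardinal.mk (Set.Iio i) + 1 < μ := by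
      rcases lt_or_ge (Cardinal.mk (Set.Iio i)) Cardinal.aleph0 with h5 | h5
      · exact (Cardinal.add_lt_aleph0 h5 Cardinal.one_lt_aleph0).trans_le hμreg.aleph0_le
      · rwa [Cardinal.add_one_eq h5]
    have h5 : Cardinal.mk S < μ := (h1.trans h2).trans_lt h4
    rw [hS] at h5
    exact lt_irrefl μ h5
  obtain ⟨β, hβS, hiβ⟩ := hcof
  -- the bad set
  have hY : ({b : ↥B | ¬ g0 b < (F i).1 b} ∪ {b : ↥B | ¬ (F i).1 b < (F β).1 b}) ∈ I :=
    hunion _ _ hi (hFinc i β hiβ)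
  have hnsub : ¬ X β ⊆ ({b : ↥B | ¬ g0 b < (F i).1 b} ∪ {b : ↥B | ¬ (F i).1 b < (F β).1 b}) :=
    fun hsub => hXI β (hdown _ _ hsub hY)
  obtain ⟨b, hbX, hbY⟩ := Set.not_subset.mp hnsub
  have hgb : g0 b < (F β).1 b := by
    rcases not_or.mp hbY with ⟨h1, h2⟩
    exact (not_not.mp h1).trans (not_not.mp h2)
  have hxA : ((Ordinal.ToType.mk (o := (b : Cardinal.{u}).ord)) ⟨(F β).1 b, (F β).2 b⟩) ∉ Ab b := by
    intro hmem
    have hlt := Ordinal.lt_lsub (fun y : Ab b =>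
      ((((Ordinal.ToType.mk (o := (b : Cardinal.{u}).ord))).symm y.1 : Set.Iio _) : Ordinal.{u}))
      ⟨_, hmem⟩
    simp only [OrderIso.symm_apply_apply] at hlt
    exact asymm hgb hlt
  apply hxA
  have h1 : fam β b ≤ q0 β := hq0 β _ ⟨b, hbX, rfl⟩
  have h2 : q0 β ≤ q := hq _ ⟨β, hβS, rfl⟩
  exact h1.trans h2
end

section
/- Let U be an ultrafilter on a set X and λ a regular cardinal, and I an ideal on λ. Then U (ordered by reverse inclusion) is I-cohesive if and only if in the ultrapower M_U = V^X/U there is a set Y covering j_U''λ (i.e., j_U(i) ∈ Y for all i < λ) such that for every I-positive set S ⊆ λ, M_U ⊨ j_U(S) ⊄ Y. -/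
universe u v w

/-- Ultrapower characterization of `I`-cohesiveness of an ultrafilter `U` (as a
directed set under `⊇`). The right-hand side renders, via Łoś's theorem, the
existence of `Y = [f]_U ∈ M_U` covering `j_U''λ` (`j_U(i) ∈ Y` iff
`{x : i ∈ f x} ∈ U`) such that `j_U(S) ⊄ Y` (`{x : S ⊆ f x} ∉ U`) for every
`I`-positive `S ⊆ λ`. Unboundedness in `(U,⊇)` of `{A_i : i ∈ S}` means it has
no lower bound in `U`. -/
theorem stmt16 {X : Type u} (U : Ultrafilter X) (l : Cardinal.{u})
    (hl : l.IsRegular) (I : Set (Set l.ord.ToType)) :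
    (∃ A : l.ord.ToType → Set X, (∀ i, A i ∈ U) ∧
        ∀ S : Set l.ord.ToType, S ∉ I → ¬ ∃ C ∈ U, ∀ i ∈ S, C ⊆ A i) ↔
    (∃ f : X → Set l.ord.ToType, (∀ i, {x | i ∈ f x} ∈ U) ∧
        ∀ S : Set l.ord.ToType, S ∉ I → {x | S ⊆ f x} ∉ U) := by
  constructor
  · rintro ⟨A, hA, hS⟩
    refine ⟨fun x => {i | x ∈ A i}, fun i => hA i, fun S hSI hmem => ?_⟩
    exact hS S hSI ⟨_, hmem, fun i hi x hx => hx hi⟩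
  · rintro ⟨f, hf, hS⟩
    refine ⟨fun i => {x | i ∈ f x}, hf, fun S hSI ⟨C, hC, hCA⟩ => ?_⟩
    exact hS S hSI (U.toFilter.mem_of_superset hC (fun x hx i hi => hCA i hi hx))
end

section
/- Let P, Q be directed sets with P not Tukey below Q, and for each p ∈ P let R^p be a directed set with R^p ≤_T Q witnessed by an unbounded map π^p : R^p → Q, where moreover no R^p has a maximal element. Define F on ∏_{p∈P} R^p by choosing for each a⃗ an unbounded (in P) set I_{a⃗} ⊆ P on which p ↦ π^p(a⃗(p)) is bounded by F(a⃗) ∈ Q. Then F maps every ≤_{J_bd(P)}-cofinal subset of ∏_{p∈P} R^p onto an unbounded subset of Q. -/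
universe u v w

/-- If `P ≰_T Q`, each `R p ≤_T Q` via an unbounded map `π p`, no `R p` has a
maximal element, and `F` assigns to each `a⃗ ∈ ∏_p R p` a bound in `Q` of
`p ↦ π p (a⃗ p)` on an unbounded set `Ia a⃗ ⊆ P`, then `F` maps every
`≤_{J_bd(P)}`-cofinal subset of the product to an unbounded subset of `Q`. -/
theorem stmt17 {P : Type u} {Q : Type v} [Preorder P] [Preorder Q]
    [IsDirected P (· ≤ ·)] [IsDirected Q (· ≤ ·)]
    (R : P → Type w) [∀ p, Preorder (R p)] [∀ p, IsDirected (R p) (· ≤ ·)]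
    (hnomax : ∀ p, ∀ r : R p, ∃ r' : R p, r < r')
    (hPQ : ¬ UnbddMap P Q)
    (π : ∀ p, R p → Q)
    (hπ : ∀ p, ∀ A : Set (R p), DirUnbounded A → DirUnbounded (π p '' A))
    (F : (∀ p, R p) → Q) (Ia : (∀ p, R p) → Set P)
    (hIa : ∀ a, DirUnbounded (Ia a))
    (hFa : ∀ a, ∀ p ∈ Ia a, π p (a p) ≤ F a)
    (Xs : Set (∀ p, R p))
    (hX : ∀ a : ∀ p, R p, ∃ b ∈ Xs, DirBounded {p : P | ¬ a p ≤ b p}) :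
    DirUnbounded (F '' Xs) := by
  rintro ⟨q, hq⟩
  -- For each p, the set {r : π p r ≤ q} is bounded in R p, since its π-image
  -- is bounded by q and π p is an unbounded map.
  have hT : ∀ p, ∃ s : R p, ∀ r : R p, π p r ≤ q → r ≤ s := by
    intro p
    by_contra h
    push_neg at h
    have hu : DirUnbounded {r : R p | π p r ≤ q} := by
      rintro ⟨s, hsbd⟩
      obtain ⟨r, hr, hrs⟩ := h s
      exact hrs (hsbd r hr)
    exact hπ p _ hu ⟨q, by rintro _ ⟨r, hr, rfl⟩; exact hr⟩
  choose s hs using hT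
  choose t hts using fun p => hnomax p (s p)
  obtain ⟨b, hbX, p₂, hp₂⟩ := hX t
  obtain ⟨p, hpI, hpp₂⟩ : ∃ p ∈ Ia b, ¬ p ≤ p₂ := by
    by_contra h
    push_neg at h
    exact hIa b ⟨p₂, h⟩
  have h1 : t p ≤ b p := by
    by_contra h
    exact hpp₂ (hp₂ p h)
  have h4 : b p ≤ s p := hs p _ ((hFa b p hpI).trans (hq _ ⟨b, hbX, rfl⟩))
  exact (hts p).not_ge (h1.trans h4)
end

section
/- Let P be a directed set, B ⊆ Sp_T(P) a set of regular cardinals with |B|⁺-directed P (every subset of P of size ≤ |B| has an upper bound). Then Pcf(B) ⊆ Sp_T(P). -/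
universe u v w

/-- `f ≤_U g` for an ultrafilter `U` on `A`. -/
def leU {A : Set Cardinal.{u}} (U : Ultrafilter A) (f g : prodSet A) : Prop :=
  {b : A | f.1 b ≤ g.1 b} ∈ U

/-- `IsUCof U μ` : `μ` is the cofinality of the (linearly ordered) ultraproduct
`∏ A / U`, i.e. `μ` is least admitting a `≤_U`-cofinal family of length `μ`. -/
def IsUCof {A : Set Cardinal.{u}} (U : Ultrafilter A) (μ : Cardinal.{u}) : Prop :=
  (∃ F : μ.ord.ToType → prodSet A, ∀ g : prodSet A, ∃ i, leU U g (F i)) ∧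
    ∀ ν : Cardinal.{u}, ν < μ →
      ¬ ∃ F : ν.ord.ToType → prodSet A, ∀ g : prodSet A, ∃ i, leU U g (F i)

/-- `Pcf(A) = {cf(∏A/U) : U an ultrafilter on A}`. -/
def Pcf (A : Set Cardinal.{u}) : Set Cardinal.{u} :=
  {μ | ∃ U : Ultrafilter A, IsUCof U μ}

/-- The PCF ideal `J_{<ρ}^A` : sets `X ⊆ A` such that every ultrafilter on `A`
concentrating on `X` gives ultraproduct cofinality `< ρ`. -/
def Jlt (A : Set Cardinal.{u}) (ρ : Cardinal.{u}) : Set (Set Cardinal.{u}) :=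
  {X | X ⊆ A ∧ ∀ U : Ultrafilter A, Subtype.val ⁻¹' X ∈ U → ∃ μ < ρ, IsUCof U μ}

/-- If `B ⊆ Sp_T(P)` is a set of regular cardinals and `P` is `|B|⁺`-directed
(every subset of `P` of size `≤ |B|` has an upper bound), then
`Pcf(B) ⊆ Sp_T(P)`. -/
theorem stmt18 {P : Type u} [Preorder P] [IsDirected P (· ≤ ·)]
    (B : Set Cardinal.{u}) (hBreg : ∀ b ∈ B, Cardinal.IsRegular b)
    (hBsp : ∀ b ∈ B, InSpT P b)
    (hdir : ∀ A : Set P,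
      Cardinal.lift.{u + 1} (Cardinal.mk A) ≤ Cardinal.mk B → DirBounded A)
    (μ : Cardinal.{u}) (hμ : μ ∈ Pcf B) :
    InSpT P μ := by
  classical
  obtain ⟨U, ⟨F, hFcof⟩, hmin⟩ := hμ
  -- Basic facts about `leU`
  have leU_refl : ∀ f : prodSet B, leU U f f := by
    intro f
    have huniv : {b : B | f.1 b ≤ f.1 b} = Set.univ := by ext b; simp
    show {b : B | f.1 b ≤ f.1 b} ∈ U
    rw [huniv]
    exact Filter.univ_mem
  have leU_trans : ∀ f g h : prodSet B, leU U f g → leU U g h → leU U f h := by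
    intro f g h h1 h2
    refine Filter.mem_of_superset (Filter.inter_mem h1 h2) (fun b hb => ?_)
    simp only [Set.mem_inter_iff, Set.mem_setOf_eq] at hb ⊢
    exact le_trans hb.1 hb.2
  have leU_total : ∀ f g : prodSet B, leU U f g ∨ leU U g f := by
    intro f g
    rcases U.mem_or_compl_mem {b : B | f.1 b ≤ g.1 b} with h | h
    · exact Or.inl h
    · refine Or.inr (Filter.mem_of_superset h (fun b hb => ?_))
      simp only [Set.mem_compl_iff, Set.mem_setOf_eq] at hb ⊢
      exact le_of_not_ge hb
  -- μ is infinite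
  have hμ0 : Cardinal.aleph0 ≤ μ := by
    by_contra hlt
    push_neg at hlt
    have hg : ∀ b : B, Ordinal.lsub (fun i : μ.ord.ToType => (F i).1 b) < (b : Cardinal.{u}).ord := by
      intro b
      apply Ordinal.lsub_lt_ord
      · rw [Cardinal.mk_toType, Cardinal.card_ord, (hBreg b b.2).cof_eq]
        exact lt_of_lt_of_le hlt (hBreg b b.2).1
      · intro i; exact (F i).2 b
    obtain ⟨i, hi⟩ := hFcof ⟨fun b => Ordinal.lsub (fun i : μ.ord.ToType => (F i).1 b), hg⟩
    have hemp : ({b : B | Ordinal.lsub (fun i : μ.ord.ToType => (F i).1 b) ≤ (F i).1 b} : Set B) = ∅ := by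
      ext b
      simp only [Set.mem_setOf_eq, Set.mem_empty_iff_false, iff_false, not_le]
      exact Ordinal.lt_lsub _ i
    have hi' : ({b : B | Ordinal.lsub (fun i : μ.ord.ToType => (F i).1 b) ≤ (F i).1 b} : Set B) ∈ U := hi
    rw [hemp] at hi'
    exact Ultrafilter.empty_notMem hi'
  -- small families have upper bounds mod U
  have hub : ∀ (ι : Type u) (h : ι → prodSet B), Cardinal.mk ι < μ → ∃ g, ∀ j, leU U (h j) g := by
    intro ι h hι
    by_contra hc
    push_neg at hc
    obtain ⟨e⟩ : Nonempty ((Cardinal.mk ι).ord.ToType ≃ ι) :=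
      Cardinal.eq.mp (by rw [Cardinal.mk_toType, Cardinal.card_ord])
    refine hmin (Cardinal.mk ι) hι ⟨fun j => h (e j), fun g => ?_⟩
    obtain ⟨j, hj⟩ := hc g
    rcases leU_total (h j) g with h1 | h1
    · exact absurd h1 hj
    · refine ⟨e.symm j, ?_⟩
      show leU U g (h (e (e.symm j)))
      rwa [Equiv.apply_symm_apply]
  -- initial segments of μ.ord.ToType are small
  have hpred : ∀ i : μ.ord.ToType, Cardinal.mk {j : μ.ord.ToType // j < i} < μ := by
    intro i
    exact Cardinal.mk_Iio_ord_toType i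
  have hopt : ∀ i : μ.ord.ToType, Cardinal.mk (Option {j : μ.ord.ToType // j < i}) < μ := by
    intro i
    rw [Cardinal.mk_option]
    exact Cardinal.add_lt_of_lt hμ0 (hpred i) (lt_of_lt_of_le Cardinal.one_lt_aleph0 hμ0)
  -- build an increasing cofinal chain G
  obtain ⟨G, hG⟩ : ∃ G : μ.ord.ToType → prodSet B,
      ∀ i, leU U (F i) (G i) ∧ ∀ j, j < i → leU U (G j) (G i) := by
    refine ⟨WellFoundedLT.fix (motive := fun _ => prodSet B) (fun i IH =>
      Classical.choose (hub (Option {j : μ.ord.ToType // j < i})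
        (fun o => o.elim (F i) (fun j => IH j.1 j.2)) (hopt i))), fun i => ?_⟩
    rw [WellFoundedLT.fix_eq]
    have hspec := Classical.choose_spec (hub (Option {j : μ.ord.ToType // j < i})
      (fun o => o.elim (F i) (fun j => WellFoundedLT.fix (motive := fun _ => prodSet B) (fun i IH =>
        Classical.choose (hub (Option {j : μ.ord.ToType // j < i})
          (fun o => o.elim (F i) (fun j => IH j.1 j.2)) (hopt i))) j.1)) (hopt i))
    exact ⟨hspec none, fun j hj => hspec (some ⟨j, hj⟩)⟩
  -- sets of size μ are unbounded in μ.ord.ToType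
  have hSunb : ∀ S : Set μ.ord.ToType, Cardinal.mk S = μ → ∀ i, ∃ i' ∈ S, i ≤ i' := by
    intro S hS i
    by_contra hc
    push_neg at hc
    have hsub : S ⊆ {j : μ.ord.ToType | j < i} := fun j hj => hc j hj
    have hle := Cardinal.mk_le_mk_of_subset hsub
    rw [hS] at hle
    exact absurd (lt_of_le_of_lt hle (hpred i)) (lt_irrefl μ)
  -- μ is regular
  have hμcof : μ ≤ μ.ord.cof := by
    by_contra hc
    push_neg at hc
    obtain ⟨S₀, hS₀unb, hS₀card⟩ := Ordinal.cof_eq μ.ord.ToType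
    rw [Ordinal.cof_toType] at hS₀card
    obtain ⟨e⟩ : Nonempty ((μ.ord.cof).ord.ToType ≃ S₀) :=
      Cardinal.eq.mp (by rw [Cardinal.mk_toType, Cardinal.card_ord, hS₀card])
    refine hmin μ.ord.cof hc ⟨fun j => G ((e j : S₀) : μ.ord.ToType), fun g => ?_⟩
    obtain ⟨i, hi⟩ := hFcof g
    obtain ⟨s, hsS, hs⟩ := hS₀unb i
    have hle : i ≤ s := hs
    have h1 : leU U g (G i) := leU_trans _ _ _ hi (hG i).1
    have h2 : leU U g (G s) := by
      rcases eq_or_lt_of_le hle with h | hlt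
      · rwa [h] at h1
      · exact leU_trans _ _ _ h1 ((hG s).2 i hlt)
    refine ⟨e.symm ⟨s, hsS⟩, ?_⟩
    show leU U g (G ((e (e.symm ⟨s, hsS⟩) : S₀) : μ.ord.ToType))
    rwa [Equiv.apply_symm_apply]
  have hμreg : μ.IsRegular := ⟨hμ0, hμcof⟩
  -- unbounded maps from each b into P
  have hqex : ∀ b : B, ∃ q : (b : Cardinal.{u}).ord.ToType → P,
      ∀ S : Set (b : Cardinal.{u}).ord.ToType, Cardinal.mk S = (b : Cardinal.{u}) →
        DirUnbounded (q '' S) := fun b => (hBsp b b.2).2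
  choose q hq using hqex
  -- the bounding map ψ : prodSet B → P
  have hψex : ∀ f : prodSet B, ∃ p : P, ∀ b : B,
      q b ((Ordinal.ToType.mk (o := (b : Cardinal.{u}).ord)) ⟨f.1 b, f.2 b⟩) ≤ p := by
    intro f
    obtain ⟨p, hp⟩ := hdir (Set.range fun b : B =>
      q b ((Ordinal.ToType.mk (o := (b : Cardinal.{u}).ord)) ⟨f.1 b, f.2 b⟩))
      (le_trans Cardinal.mk_range_le_lift (le_of_eq (Cardinal.lift_id'.{u, u+1} _)))
    exact ⟨p, fun b => hp _ ⟨b, rfl⟩⟩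
  choose ψ hψ using hψex
  refine ⟨hμreg, fun i => ψ (G i), ?_⟩
  intro S hS
  rintro ⟨pstar, hps⟩
  -- the trace of G on coordinate b
  set T : ∀ b : B, Set ((b : Cardinal.{u}).ord.ToType) := fun b =>
    (fun i => (Ordinal.ToType.mk (o := (b : Cardinal.{u}).ord)) ⟨(G i).1 b, (G i).2 b⟩) '' S with hT
  have hTbd : ∀ b : B, ∀ x ∈ T b, q b x ≤ pstar := by
    rintro b x ⟨i, hiS, rfl⟩
    exact le_trans (hψ (G i) b) (hps _ ⟨i, hiS, rfl⟩)
  have hTcard : ∀ b : B, Cardinal.mk (T b) < (b : Cardinal.{u}) := by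
    intro b
    by_contra hcb
    push_neg at hcb
    obtain ⟨S'', hS''⟩ := Cardinal.le_mk_iff_exists_set.mp hcb
    have himg : Cardinal.mk (Subtype.val '' S'' : Set ((b : Cardinal.{u}).ord.ToType))
        = (b : Cardinal.{u}) := by
      rw [Cardinal.mk_image_eq Subtype.val_injective, hS'']
    refine hq b _ himg ⟨pstar, ?_⟩
    rintro a ⟨x, hx, rfl⟩
    obtain ⟨y, _, rfl⟩ := hx
    exact hTbd b _ y.2
  -- the diagonal bound g
  have hgbd : ∀ b : B, Ordinal.lsub (fun x : T b =>
      ((Ordinal.ToType.mk (o := (b : Cardinal.{u}).ord)).symm x.1 : Set.Iio (b : Cardinal.{u}).ord).1)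
      < (b : Cardinal.{u}).ord := by
    intro b
    apply Ordinal.lsub_lt_ord
    · rw [(hBreg b b.2).cof_eq]
      exact hTcard b
    · intro x
      exact ((Ordinal.ToType.mk (o := (b : Cardinal.{u}).ord)).symm x.1).2
  obtain ⟨i, hi⟩ := hFcof ⟨fun b => Ordinal.lsub (fun x : T b =>
      ((Ordinal.ToType.mk (o := (b : Cardinal.{u}).ord)).symm x.1 : Set.Iio (b : Cardinal.{u}).ord).1), hgbd⟩
  obtain ⟨i', hi'S, hii'⟩ := hSunb S hS i
  have h1 : leU U (⟨fun b => Ordinal.lsub (fun x : T b =>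
      ((Ordinal.ToType.mk (o := (b : Cardinal.{u}).ord)).symm x.1 : Set.Iio (b : Cardinal.{u}).ord).1), hgbd⟩ : prodSet B) (G i') := by
    have hFi : leU U _ (G i) := leU_trans _ _ _ hi (hG i).1
    rcases eq_or_lt_of_le hii' with h | hlt
    · rwa [h] at hFi
    · exact leU_trans _ _ _ hFi ((hG i').2 i hlt)
  have hstrict : ∀ b : B, (G i').1 b < Ordinal.lsub (fun x : T b =>
      ((Ordinal.ToType.mk (o := (b : Cardinal.{u}).ord)).symm x.1 : Set.Iio (b : Cardinal.{u}).ord).1) := by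
    intro b
    have hx : (Ordinal.ToType.mk (o := (b : Cardinal.{u}).ord)) ⟨(G i').1 b, (G i').2 b⟩ ∈ T b :=
      ⟨i', hi'S, rfl⟩
    have h2 := Ordinal.lt_lsub (fun x : T b =>
      ((Ordinal.ToType.mk (o := (b : Cardinal.{u}).ord)).symm x.1 : Set.Iio (b : Cardinal.{u}).ord).1)
      ⟨_, hx⟩
    rwa [OrderIso.symm_apply_apply] at h2
  have hemp : ({b : B | Ordinal.lsub (fun x : T b =>
      ((Ordinal.ToType.mk (o := (b : Cardinal.{u}).ord)).symm x.1 : Set.Iio (b : Cardinal.{u}).ord).1)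
      ≤ (G i').1 b} : Set B) = ∅ := by
    ext b
    simp only [Set.mem_setOf_eq, Set.mem_empty_iff_false, iff_false, not_le]
    exact hstrict b
  have h1' : ({b : B | Ordinal.lsub (fun x : T b =>
      ((Ordinal.ToType.mk (o := (b : Cardinal.{u}).ord)).symm x.1 : Set.Iio (b : Cardinal.{u}).ord).1)
      ≤ (G i').1 b} : Set B) ∈ U := h1
  rw [hemp] at h1'
  exact Ultrafilter.empty_notMem h1'
end
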